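/- arXiv:0904.3783 — 7 statements merged into one kernel-verified Lean document; each statement's English description precedes it below -/
import Mathlib

section
/- Let (V,V^+,e) be an AOU space, let (W, {C_n}) be a matrix ordered *-vector space, and let φ : W → OMIN(V) be a positive linear map. Then φ is completely positive. -/
open scoped ComplexOrder
open Finset

noncomputable section

section Defs
variable {V : Type*} [AddCommGroup V] [Module ℂ V]

/-- The elementary tensor `a ⊗ v` in `M_n(V) ≅ M_n(ℂ) ⊗ V`. -/
def eTensor {n : ℕ} (a : Matrix (Fin n) (Fin n) ℂ) (v : V) : Matrix (Fin n) (Fin n) V :=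
  Matrix.of fun p q => a p q • v

/-- The conjugation `X* A X` of `A ∈ M_n(V)` by a scalar matrix `X ∈ M_{n,m}(ℂ)`. -/
def mconj {n m : ℕ} (X : Matrix (Fin n) (Fin m) ℂ) (A : Matrix (Fin n) (Fin n) V) :
    Matrix (Fin m) (Fin m) V :=
  Matrix.of fun i j => ∑ k, ∑ l, (star (X k i) * X l j) • A k l

/-- The diagonal matrix `e_n` with `e` in each diagonal entry. -/
def eMat (e : V) (n : ℕ) : Matrix (Fin n) (Fin n) V :=
  Matrix.of fun i j => if i = j then e else 0

/-- The minimal cone `C_n^min(V)`. -/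
def Cmin (pos : Set V) (n : ℕ) : Set (Matrix (Fin n) (Fin n) V) :=
  {M | ∀ lam : Fin n → ℂ, (∑ i, ∑ j, (star (lam i) * lam j) • M i j) ∈ pos}

/-- The cone `D_n^max(V)` of sums of tensors `a ⊗ v` with `a ∈ M_n⁺`, `v ∈ V⁺`. -/
def Dmax (pos : Set V) (n : ℕ) : Set (Matrix (Fin n) (Fin n) V) :=
  {M | ∃ (k : ℕ) (a : Fin k → Matrix (Fin n) (Fin n) ℂ) (v : Fin k → V),
    (∀ i, (a i).PosSemidef) ∧ (∀ i, v i ∈ pos) ∧ M = ∑ i, eTensor (a i) (v i)}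

/-- The maximal cone `C_n^max(V)`: the Archimedeanization of `D_n^max(V)`. -/
def Cmax (pos : Set V) (e : V) (n : ℕ) : Set (Matrix (Fin n) (Fin n) V) :=
  {M | ∀ r : ℝ, 0 < r → (r : ℂ) • eMat e n + M ∈ Dmax pos n}

end Defs

section StarDefs
variable {V : Type*} [AddCommGroup V] [Module ℂ V] [StarAddMonoid V] [StarModule ℂ V]

/-- `(V, pos)` is an ordered `*`-vector space. -/
def IsOrderedStar (pos : Set V) : Prop :=
  (∀ v ∈ pos, star v = v) ∧
  (∀ r : ℝ, 0 ≤ r → ∀ v ∈ pos, (r : ℂ) • v ∈ pos) ∧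
  (∀ v ∈ pos, ∀ w ∈ pos, v + w ∈ pos) ∧
  (∀ v ∈ pos, -v ∈ pos → v = 0)

/-- `(V, pos, e)` is an Archimedean order unit (AOU) space. -/
def IsAOU (pos : Set V) (e : V) : Prop :=
  IsOrderedStar pos ∧ star e = e ∧
  (∀ v : V, star v = v → ∃ r : ℝ, 0 < r ∧ (r : ℂ) • e - v ∈ pos) ∧
  (∀ v : V, (∀ r : ℝ, 0 < r → (r : ℂ) • e + v ∈ pos) → v ∈ pos)

/-- A state on `(V, pos, e)`: a unital positive linear functional. -/
def IsState (pos : Set V) (e : V) (s : V →ₗ[ℂ] ℂ) : Prop :=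
  s e = 1 ∧ ∀ v ∈ pos, 0 ≤ s v

/-- A positive linear functional. -/
def IsPosFunc (pos : Set V) (f : V →ₗ[ℂ] ℂ) : Prop := ∀ v ∈ pos, 0 ≤ f v

/-- A matrix ordering on the `*`-vector space `V`. -/
def IsMatrixOrdering (C : ∀ n : ℕ, Set (Matrix (Fin n) (Fin n) V)) : Prop :=
  (∀ (n : ℕ) (M : Matrix (Fin n) (Fin n) V), M ∈ C n → star M = M) ∧
  (∀ (n : ℕ) (r : ℝ), 0 ≤ r → ∀ M ∈ C n, (r : ℂ) • M ∈ C n) ∧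
  (∀ n : ℕ, ∀ M ∈ C n, ∀ N ∈ C n, M + N ∈ C n) ∧
  (∀ n : ℕ, ∀ M ∈ C n, -M ∈ C n → M = 0) ∧
  (∀ (n m : ℕ) (X : Matrix (Fin n) (Fin m) ℂ), ∀ M ∈ C n, mconj X M ∈ C m)

/-- `e` is a matrix order unit for the family `C`. -/
def IsMatrixOrderUnit (C : ∀ n : ℕ, Set (Matrix (Fin n) (Fin n) V)) (e : V) : Prop :=
  star e = e ∧
  ∀ (n : ℕ) (M : Matrix (Fin n) (Fin n) V), star M = M →
    ∃ r : ℝ, 0 < r ∧ (r : ℂ) • eMat e n - M ∈ C n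

/-- `e` is an Archimedean matrix order unit for the family `C`. -/
def IsArchMatrixOrderUnit (C : ∀ n : ℕ, Set (Matrix (Fin n) (Fin n) V)) (e : V) : Prop :=
  IsMatrixOrderUnit C e ∧
  ∀ (n : ℕ) (M : Matrix (Fin n) (Fin n) V),
    (∀ r : ℝ, 0 < r → (r : ℂ) • eMat e n + M ∈ C n) → M ∈ C n

/-- `(V, C, e)` is an (abstract) operator system. -/
def IsOperatorSystem (C : ∀ n : ℕ, Set (Matrix (Fin n) (Fin n) V)) (e : V) : Prop :=
  IsMatrixOrdering C ∧ IsArchMatrixOrderUnit C e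

/-- The ground-level cone of a matrix ordering, under `M_1(V) ≅ V`. -/
def groundPos (C : ∀ n : ℕ, Set (Matrix (Fin n) (Fin n) V)) : Set V :=
  {v | (Matrix.of fun _ _ : Fin 1 => v) ∈ C 1}

/-- An operator system structure on the AOU space `(V, pos, e)`. -/
def IsOpSysStructure (pos : Set V) (e : V) (C : ∀ n : ℕ, Set (Matrix (Fin n) (Fin n) V)) :
    Prop :=
  IsOperatorSystem C e ∧ C 1 = {M | M 0 0 ∈ pos}

end StarDefs

section DualDefs
variable {V : Type*} [AddCommGroup V] [Module ℂ V] [StarAddMonoid V] [StarModule ℂ V]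

/-- The adjoint functional `f*` with `f*(v) = conj (f (v*))`. -/
def starFunc (f : V →ₗ[ℂ] ℂ) : V →ₗ[ℂ] ℂ where
  toFun v := star (f (star v))
  map_add' v w := by simp
  map_smul' c v := by simp [star_smul, map_smul, mul_comm]

/-- The pairing between a matrix of functionals and a matrix over `V`:
`(f_{ij})((v_{ij})) = ∑_{ij} f_{ij}(v_{ij})`. -/
def dPair {n : ℕ} (F : Matrix (Fin n) (Fin n) (V →ₗ[ℂ] ℂ))
    (A : Matrix (Fin n) (Fin n) V) : ℂ :=
  ∑ i, ∑ j, F i j (A i j)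

/-- The dual cones `P_n^d` of a matrix ordering on `V`. -/
def dualCones (P : ∀ n : ℕ, Set (Matrix (Fin n) (Fin n) V)) (n : ℕ) :
    Set (Matrix (Fin n) (Fin n) (V →ₗ[ℂ] ℂ)) :=
  {F | ∀ A ∈ P n, 0 ≤ dPair F A}

/-- The predual cones `^dQ_n` of a matrix ordering on `V'`. -/
def preCones (Q : ∀ n : ℕ, Set (Matrix (Fin n) (Fin n) (V →ₗ[ℂ] ℂ))) (n : ℕ) :
    Set (Matrix (Fin n) (Fin n) V) :=
  {A | ∀ F ∈ Q n, 0 ≤ dPair F A}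

/-- A matrix ordering on the dual space `V'` (hermitian via `starFunc`,
compatibility under conjugation by scalar matrices). -/
def IsDualMatrixOrdering (Q : ∀ n : ℕ, Set (Matrix (Fin n) (Fin n) (V →ₗ[ℂ] ℂ))) : Prop :=
  (∀ (n : ℕ) (F : Matrix (Fin n) (Fin n) (V →ₗ[ℂ] ℂ)), F ∈ Q n →
    ∀ i j, F i j = starFunc (F j i)) ∧
  (∀ (n : ℕ) (r : ℝ), 0 ≤ r → ∀ F ∈ Q n, (r : ℂ) • F ∈ Q n) ∧
  (∀ n : ℕ, ∀ F ∈ Q n, ∀ G ∈ Q n, F + G ∈ Q n) ∧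
  (∀ n : ℕ, ∀ F ∈ Q n, -F ∈ Q n → F = 0) ∧
  (∀ (n m : ℕ) (X : Matrix (Fin n) (Fin m) ℂ), ∀ F ∈ Q n, mconj X F ∈ Q m)

/-- Weak*-closedness of a set of matrices of functionals: closedness in the topology
induced by the pairing against all of `M_n(V)`, with the topology of pointwise convergence. -/
def WeakStarClosed {n : ℕ} (Q : Set (Matrix (Fin n) (Fin n) (V →ₗ[ℂ] ℂ))) : Prop :=
  @IsClosed _ (TopologicalSpace.induced
    (fun F : Matrix (Fin n) (Fin n) (V →ₗ[ℂ] ℂ) => fun A => dPair F A)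
    Pi.topologicalSpace) Q

/-- The minimal norm on an AOU space: `‖v‖_m = sup { |s(v)| : s a state }`. -/
def minNorm (pos : Set V) (e : V) (v : V) : ℝ :=
  ⨆ s : {s : V →ₗ[ℂ] ℂ // IsState pos e s}, ‖s.1 v‖

/-- Bounded (continuous) linear functionals on `V`. -/
def IsBddFunc (pos : Set V) (e : V) (f : V →ₗ[ℂ] ℂ) : Prop :=
  ∃ c : ℝ, ∀ v, ‖f v‖ ≤ c * minNorm pos e v

end DualDefs

end

/-- Every positive linear map from a matrix ordered `*`-vector space
into `OMIN(V)` is completely positive. -/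
theorem positive_into_OMIN_is_completelyPositive
    {V : Type*} [AddCommGroup V] [Module ℂ V] [StarAddMonoid V] [StarModule ℂ V]
    {W : Type*} [AddCommGroup W] [Module ℂ W] [StarAddMonoid W] [StarModule ℂ W]
    (pos : Set V) (e : V) (hA : IsAOU pos e)
    (D : ∀ n : ℕ, Set (Matrix (Fin n) (Fin n) W)) (hD : IsMatrixOrdering D)
    (φ : W →ₗ[ℂ] V) (hpos : ∀ w ∈ groundPos D, φ w ∈ pos) :
    ∀ n : ℕ, ∀ M ∈ D n, M.map φ ∈ Cmin pos n := by
  intro n M hM lam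
  set X : Matrix (Fin n) (Fin 1) ℂ := Matrix.of fun k _ => lam k with hX
  have hconj : mconj X M ∈ D 1 := hD.2.2.2.2 n 1 X M hM
  have key : (∑ k, ∑ l, (star (lam k) * lam l) • M k l) ∈ groundPos D := by
    have : (Matrix.of fun _ _ : Fin 1 => ∑ k, ∑ l, (star (lam k) * lam l) • M k l)
        = mconj X M := by
      ext i j
      fin_cases i <;> fin_cases j <;> simp [mconj, hX]
    unfold groundPos; rw [Set.mem_setOf_eq, this]; exact hconj
  have := hpos _ key
  have hmap : φ (∑ k, ∑ l, (star (lam k) * lam l) • M k l)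
      = ∑ k, ∑ l, (star (lam k) * lam l) • φ (M k l) := by
    simp [map_sum, map_smul]
  rw [hmap] at this
  simpa [Matrix.map] using this
end

section
/- Let (V,V^+,e) be an AOU space. If {C_n} is any operator system structure on (V,V^+,e) (so C_1 = V^+), then C_n ⊆ C_n^min(V) for all n; i.e., OMIN is the weakest operator system structure on V. -/
open scoped ComplexOrder
open Finset

/-- `OMIN` is the weakest operator system structure on an AOU space:
any operator system structure `{C_n}` satisfies `C_n ⊆ C_n^min`. -/
theorem opSysStructure_subset_Cmin
    {V : Type*} [AddCommGroup V] [Module ℂ V] [StarAddMonoid V] [StarModule ℂ V]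
    (pos : Set V) (e : V) (hA : IsAOU pos e)
    (C : ∀ n : ℕ, Set (Matrix (Fin n) (Fin n) V)) (hC : IsOpSysStructure pos e C) :
    ∀ n : ℕ, C n ⊆ Cmin pos n := by
  intro n M hM lam
  obtain ⟨⟨hord, _⟩, hC1⟩ := hC
  have h := hord.2.2.2.2 n 1 (Matrix.of fun k _ => lam k) M hM
  rw [hC1] at h
  simpa [mconj] using h
end

section
/- Let (V,V^+) be an ordered *-vector space and define D_n^max(V) = {∑_{i=1}^k a_i ⊗ v_i : a_i ∈ M_n^+, v_i ∈ V^+}. Then D_n^max(V) = {α diag(v_1,...,v_m) α* : α ∈ M_{n,m}(ℂ), v_i ∈ V^+, m ∈ ℕ}. -/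
open scoped ComplexOrder
open Finset

/-- `D_n^max(V)` coincides with the set of all matrices of the form
`α diag(v_1, …, v_m) α*` with `α ∈ M_{n,m}(ℂ)` and `v_i ∈ V⁺`. -/
theorem Dmax_eq_conj_diag
    {V : Type*} [AddCommGroup V] [Module ℂ V] [StarAddMonoid V] [StarModule ℂ V]
    (pos : Set V) (h : IsOrderedStar pos) (n : ℕ) :
    Dmax pos n =
      {M | ∃ (m : ℕ) (α : Matrix (Fin n) (Fin m) ℂ) (v : Fin m → V),
        (∀ i, v i ∈ pos) ∧
        M = Matrix.of fun i j => ∑ k, (α i k * star (α j k)) • v k} := by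
  ext M
  constructor
  · rintro ⟨k, a, v, ha, hv, rfl⟩
    open scoped MatrixOrder in set B : Fin k → Matrix (Fin n) (Fin n) ℂ := fun t => CFC.sqrt (a t) with hB
    have hBmul : ∀ t, B t * B t = a t := by
      open scoped MatrixOrder in exact fun t => CFC.sqrt_mul_sqrt_self (a t) (ha t).nonneg
    have hBherm : ∀ t, (B t).IsHermitian := by
      open scoped MatrixOrder in exact fun t => (Matrix.LE.le.posSemidef (CFC.sqrt_nonneg (a t))).1
    refine ⟨k * n,
      Matrix.of fun i p => B (finProdFinEquiv.symm p).1 i (finProdFinEquiv.symm p).2,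
      fun p => v (finProdFinEquiv.symm p).1, fun p => hv _, ?_⟩
    ext i j
    simp only [Matrix.of_apply, Matrix.sum_apply, eTensor]
    rw [← Equiv.sum_comp finProdFinEquiv
      (fun p => ((B (finProdFinEquiv.symm p).1 i (finProdFinEquiv.symm p).2) *
        star (B (finProdFinEquiv.symm p).1 j (finProdFinEquiv.symm p).2)) •
        v (finProdFinEquiv.symm p).1), Fintype.sum_prod_type]
    simp only [Equiv.symm_apply_apply]
    refine Finset.sum_congr rfl fun t _ => ?_
    rw [← Finset.sum_smul]
    congr 1
    have h1 : a t i j = (B t * B t) i j := by rw [hBmul]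
    rw [h1, Matrix.mul_apply]
    refine Finset.sum_congr rfl fun c _ => ?_
    congr 1
    exact ((hBherm t).apply c j).symm
  · rintro ⟨m, α, v, hv, rfl⟩
    refine ⟨m, fun p => Matrix.of fun i j => α i p * star (α j p), v, fun p => ?_, hv, ?_⟩
    · have heq : (Matrix.of fun i j => α i p * star (α j p)) =
          (Matrix.of fun i (_ : Fin 1) => α i p) *
            Matrix.conjTranspose (Matrix.of fun i (_ : Fin 1) => α i p) := by
        ext i j
        simp [Matrix.mul_apply, Matrix.conjTranspose_apply]
      show (Matrix.of fun i j => α i p * star (α j p)).PosSemidef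
      rw [heq]
      exact Matrix.posSemidef_self_mul_conjTranspose _
    · ext i j
      simp [Matrix.sum_apply, eTensor]
end

section
/- Let (V,V^+,e) be an AOU space. Then D^max(V) = {D_n^max(V)} is a matrix ordering on V (in particular D_n^max ∩ −D_n^max = {0}), and e is a matrix order unit for this ordering: for every hermitian w ∈ M_n(V)_h there exists r > 0 with r e_n − w ∈ D_n^max(V). -/
open scoped ComplexOrder
open Finset

noncomputable section Aux
variable {V : Type*} [AddCommGroup V] [Module ℂ V]

/-- outer "product" matrix u ⬝ wᴴ -/
def oT {n : ℕ} (u w : Fin n → ℂ) : Matrix (Fin n) (Fin n) ℂ :=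
  Matrix.of fun i j => u i * star (w j)

lemma oT_posSemidef {n : ℕ} (u : Fin n → ℂ) : (oT u u).PosSemidef := by
  refine Matrix.posSemidef_iff_dotProduct_mulVec.mpr ⟨?_, ?_⟩
  · ext i j
    simp [oT, Matrix.conjTranspose_apply, mul_comm]
  · intro x
    have h : dotProduct (star x) ((oT u u).mulVec x)
        = star (∑ j, star (u j) * x j) * (∑ j, star (u j) * x j) := by
      simp only [dotProduct, Matrix.mulVec, oT, Matrix.of_apply, Pi.star_apply,
        star_sum, star_mul, star_star, Finset.sum_mul, Finset.mul_sum]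
      rw [Finset.sum_comm]
      refine Finset.sum_congr rfl fun i _ => Finset.sum_congr rfl fun j _ => by ring
    rw [h]
    exact star_mul_self_nonneg _

lemma eTensor_smul {n : ℕ} (a : Matrix (Fin n) (Fin n) ℂ) (c : ℂ) (v : V) :
    eTensor a (c • v) = c • eTensor a v := by
  ext i j
  simp [eTensor, smul_comm c]

lemma Dmax_zero (pos : Set V) (n : ℕ) : (0 : Matrix (Fin n) (Fin n) V) ∈ Dmax pos n :=
  ⟨0, fun i => i.elim0, fun i => i.elim0, fun i => i.elim0, fun i => i.elim0, by simp⟩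

lemma Dmax_single {pos : Set V} {n : ℕ} {a : Matrix (Fin n) (Fin n) ℂ} {v : V}
    (ha : a.PosSemidef) (hv : v ∈ pos) : eTensor a v ∈ Dmax pos n :=
  ⟨1, fun _ => a, fun _ => v, fun _ => ha, fun _ => hv, by simp⟩

lemma Dmax_add {pos : Set V} {n : ℕ} {M N : Matrix (Fin n) (Fin n) V}
    (hM : M ∈ Dmax pos n) (hN : N ∈ Dmax pos n) : M + N ∈ Dmax pos n := by
  obtain ⟨k, a, v, ha, hv, rfl⟩ := hM
  obtain ⟨k', a', v', ha', hv', rfl⟩ := hN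
  refine ⟨k + k', Fin.append a a', Fin.append v v', ?_, ?_, ?_⟩
  · intro i
    refine Fin.addCases (fun i => ?_) (fun i => ?_) i <;>
      simp [Fin.append_left, Fin.append_right, ha _, ha' _]
  · intro i
    refine Fin.addCases (fun i => ?_) (fun i => ?_) i <;>
      simp [Fin.append_left, Fin.append_right, hv _, hv' _]
  · rw [Fin.sum_univ_add]
    simp [Fin.append_left, Fin.append_right]

lemma Dmax_sum {pos : Set V} {n : ℕ} {ι : Type*} (s : Finset ι)
    (f : ι → Matrix (Fin n) (Fin n) V) (hf : ∀ i ∈ s, f i ∈ Dmax pos n) :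
    ∑ i ∈ s, f i ∈ Dmax pos n :=
  Finset.sum_induction f (· ∈ Dmax pos n) (fun _ _ => Dmax_add) (Dmax_zero pos n) hf

end Aux
noncomputable section Aux2
open Matrix
variable {V : Type*} [AddCommGroup V] [Module ℂ V]

lemma Dmax_smul {pos : Set V} {n : ℕ} {M : Matrix (Fin n) (Fin n) V}
    (hpos : ∀ r : ℝ, 0 ≤ r → ∀ v ∈ pos, (r : ℂ) • v ∈ pos)
    (r : ℝ) (hr : 0 ≤ r) (hM : M ∈ Dmax pos n) : (r : ℂ) • M ∈ Dmax pos n := by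
  obtain ⟨k, a, v, ha, hv, rfl⟩ := hM
  refine ⟨k, a, fun i => (r : ℂ) • v i, ha, fun i => hpos r hr _ (hv i), ?_⟩
  rw [Finset.smul_sum]
  exact Finset.sum_congr rfl fun i _ => (eTensor_smul _ _ _).symm

section StarV
variable [StarAddMonoid V] [StarModule ℂ V]

lemma Dmax_star {pos : Set V} {n : ℕ} {M : Matrix (Fin n) (Fin n) V}
    (hpos : ∀ v ∈ pos, star v = v) (hM : M ∈ Dmax pos n) : star M = M := by
  obtain ⟨k, a, v, ha, hv, rfl⟩ := hM
  ext i j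
  rw [Matrix.star_apply, Matrix.sum_apply, Matrix.sum_apply, star_sum]
  refine Finset.sum_congr rfl fun t _ => ?_
  have h1 : star (a t j i) = a t i j := by
    conv_rhs => rw [← (ha t).1]
    simp [Matrix.conjTranspose_apply]
  simp [eTensor, star_smul, h1, hpos _ (hv t)]

end StarV

/-- `mconj X` as an additive monoid hom. -/
def mconjHom {n m : ℕ} (X : Matrix (Fin n) (Fin m) ℂ) :
    Matrix (Fin n) (Fin n) V →+ Matrix (Fin m) (Fin m) V where
  toFun := mconj X
  map_zero' := by ext i j; simp [mconj]
  map_add' A B := by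
    ext i j
    simp [mconj, smul_add, Finset.sum_add_distrib]

lemma mconj_sum {n m : ℕ} (X : Matrix (Fin n) (Fin m) ℂ) {ι : Type*} (s : Finset ι)
    (f : ι → Matrix (Fin n) (Fin n) V) :
    mconj X (∑ i ∈ s, f i) = ∑ i ∈ s, mconj X (f i) :=
  map_sum (mconjHom X) f s

lemma mconj_eTensor {n m : ℕ} (X : Matrix (Fin n) (Fin m) ℂ)
    (a : Matrix (Fin n) (Fin n) ℂ) (v : V) :
    mconj X (eTensor a v) = eTensor (Xᴴ * a * X) v := by
  ext i j
  simp only [mconj, eTensor, Matrix.of_apply, Matrix.mul_apply, Matrix.conjTranspose_apply,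
    smul_smul, Finset.sum_mul, Finset.mul_sum]
  simp only [Finset.sum_smul]
  rw [Finset.sum_comm]
  refine Finset.sum_congr rfl fun k _ => Finset.sum_congr rfl fun l _ => ?_
  congr 1
  ring

lemma Dmax_mconj {pos : Set V} {n m : ℕ} (X : Matrix (Fin n) (Fin m) ℂ)
    {M : Matrix (Fin n) (Fin n) V} (hM : M ∈ Dmax pos n) : mconj X M ∈ Dmax pos m := by
  obtain ⟨k, a, v, ha, hv, rfl⟩ := hM
  rw [mconj_sum]
  refine Dmax_sum _ _ fun i _ => ?_
  rw [mconj_eTensor]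
  exact Dmax_single ((ha i).conjTranspose_mul_mul_same X) (hv i)

end Aux2
noncomputable section Aux3
variable {V : Type*} [AddCommGroup V] [Module ℂ V]

lemma pos_sum {pos : Set V}
    (hadd : ∀ v ∈ pos, ∀ w ∈ pos, v + w ∈ pos) (h0 : (0 : V) ∈ pos)
    {ι : Type*} (s : Finset ι) (f : ι → V) (hf : ∀ i ∈ s, f i ∈ pos) :
    ∑ i ∈ s, f i ∈ pos :=
  Finset.sum_induction f (· ∈ pos) (fun a b hb hc => hadd a hb b hc) h0 hf

lemma quad_mem {pos : Set V} {n : ℕ}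
    (hsc : ∀ r : ℝ, 0 ≤ r → ∀ v ∈ pos, (r : ℂ) • v ∈ pos)
    (hadd : ∀ v ∈ pos, ∀ w ∈ pos, v + w ∈ pos) (h0 : (0 : V) ∈ pos)
    {M : Matrix (Fin n) (Fin n) V} (hM : M ∈ Dmax pos n) (lam : Fin n → ℂ) :
    (∑ p, ∑ q, (star (lam p) * lam q) • M p q) ∈ pos := by
  obtain ⟨k, a, v, ha, hv, rfl⟩ := hM
  have key : (∑ p, ∑ q, (star (lam p) * lam q) • (∑ t, eTensor (a t) (v t)) p q)
      = ∑ t, (dotProduct (star lam) ((a t).mulVec lam)) • v t := by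
    simp only [Matrix.sum_apply, eTensor, Matrix.of_apply, Finset.smul_sum, smul_smul,
      dotProduct, Matrix.mulVec, Pi.star_apply, Finset.mul_sum, Finset.sum_smul]
    refine Eq.trans (Finset.sum_congr rfl fun p _ => Finset.sum_comm) ?_
    rw [Finset.sum_comm]
    refine Finset.sum_congr rfl fun t _ => Finset.sum_congr rfl fun p _ =>
      Finset.sum_congr rfl fun q _ => ?_
    congr 1
    ring
  rw [key]
  refine pos_sum hadd h0 _ _ fun t _ => ?_
  have hnn : 0 ≤ dotProduct (star lam) ((a t).mulVec lam) := (ha t).dotProduct_mulVec_nonneg lam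
  obtain ⟨hre, him⟩ := Complex.nonneg_iff.mp hnn
  have hc : dotProduct (star lam) ((a t).mulVec lam)
      = ((dotProduct (star lam) ((a t).mulVec lam)).re : ℂ) := by
    apply Complex.ext <;> simp [him]
  rw [hc]
  exact hsc _ hre _ (hv t)

end Aux3
noncomputable section Aux4
set_option linter.unusedSectionVars false
variable {V : Type*} [AddCommGroup V] [Module ℂ V]

lemma quad_single {n : ℕ} (M : Matrix (Fin n) (Fin n) V) (p : Fin n) (lam : Fin n → ℂ)
    (hl : ∀ x, lam x = if x = p then 1 else 0) :
    (∑ a, ∑ b, (star (lam a) * lam b) • M a b) = M p p := by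
  have hp : lam p = 1 := by rw [hl]; simp
  have h0 : ∀ x, x ≠ p → lam x = 0 := fun x hx => by rw [hl]; simp [hx]
  have inner : ∀ a, (∑ b, (star (lam a) * lam b) • M a b) = (star (lam a) * 1) • M a p :=
    fun a => by
      rw [Finset.sum_eq_single_of_mem p (Finset.mem_univ p)
        (fun b _ hb => by rw [h0 b hb]; simp), hp]
  rw [Finset.sum_congr rfl fun a _ => inner a]
  rw [Finset.sum_eq_single_of_mem p (Finset.mem_univ p)
    (fun a _ ha => by rw [h0 a ha]; simp), hp]
  simp

lemma quad_expand {n : ℕ} (M : Matrix (Fin n) (Fin n) V) {i j : Fin n} (hij : i ≠ j)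
    (c d : ℂ) (lam : Fin n → ℂ)
    (hl : ∀ x, lam x = if x = i then c else if x = j then d else 0) :
    (∑ p, ∑ q, (star (lam p) * lam q) • M p q)
      = ((star c * c) • M i i + (star c * d) • M i j)
        + ((star d * c) • M j i + (star d * d) • M j j) := by
  have hi : lam i = c := by rw [hl]; simp
  have hj : lam j = d := by rw [hl]; simp [Ne.symm hij]
  have h0 : ∀ x, x ≠ i → x ≠ j → lam x = 0 := fun x h1 h2 => by rw [hl]; simp [h1, h2]
  have inner : ∀ p, (∑ q, (star (lam p) * lam q) • M p q)
      = (star (lam p) * c) • M p i + (star (lam p) * d) • M p j :=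
    fun p => by
      rw [Finset.sum_eq_add_of_mem i j (Finset.mem_univ i) (Finset.mem_univ j) hij
        (fun q _ hq => by rw [h0 q hq.1 hq.2]; simp), hi, hj]
  rw [Finset.sum_congr rfl fun p _ => inner p]
  rw [Finset.sum_eq_add_of_mem i j (Finset.mem_univ i) (Finset.mem_univ j) hij
    (fun p _ hp => by rw [h0 p hp.1 hp.2]; simp), hi, hj]

lemma Dmax_proper {pos : Set V} {n : ℕ}
    (hsc : ∀ r : ℝ, 0 ≤ r → ∀ v ∈ pos, (r : ℂ) • v ∈ pos)
    (hadd : ∀ v ∈ pos, ∀ w ∈ pos, v + w ∈ pos) (h0 : (0 : V) ∈ pos)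
    (hprop : ∀ v ∈ pos, -v ∈ pos → v = 0)
    {M : Matrix (Fin n) (Fin n) V} (hM : M ∈ Dmax pos n) (hM' : -M ∈ Dmax pos n) :
    M = 0 := by
  have hq : ∀ lam : Fin n → ℂ, (∑ p, ∑ q, (star (lam p) * lam q) • M p q) = 0 := by
    intro lam
    refine hprop _ (quad_mem hsc hadd h0 hM lam) ?_
    have h2 := quad_mem hsc hadd h0 hM' lam
    have heq : (∑ p, ∑ q, (star (lam p) * lam q) • (-M) p q)
        = -(∑ p, ∑ q, (star (lam p) * lam q) • M p q) := by
      simp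
    rwa [heq] at h2
  have hdiag : ∀ p, M p p = 0 := by
    intro p
    have h := hq (fun x => if x = p then 1 else 0)
    rwa [quad_single M p _ (fun x => rfl)] at h
  ext i j
  by_cases hij : i = j
  · subst hij; simp [hdiag i]
  · have h1 := hq (fun x => if x = i then 1 else if x = j then 1 else 0)
    rw [quad_expand M hij 1 1 _ (fun x => rfl)] at h1
    have h2 := hq (fun x => if x = i then 1 else if x = j then Complex.I else 0)
    rw [quad_expand M hij 1 Complex.I _ (fun x => rfl)] at h2
    simp only [star_one, one_mul, mul_one, one_smul, hdiag, add_zero, zero_add] at h1 h2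
    -- h1 : M i j + M j i = 0
    -- h2 : I • M i j + star I • M j i = 0  (roughly)
    have hstarI : (star Complex.I : ℂ) = -Complex.I := by
      simp [Complex.star_def, Complex.conj_I]
    rw [hstarI] at h2
    have h3 : Complex.I • M i j - Complex.I • M j i = 0 := by
      simpa [sub_eq_add_neg] using h2
    have e3 : M i j = M j i := by
      rw [← smul_sub] at h3
      have h4 := congrArg (fun x => (-Complex.I) • x) h3
      simp only [smul_smul, neg_mul, Complex.I_mul_I, neg_neg, one_smul, smul_zero] at h4
      exact sub_eq_zero.mp h4
    have e4 : (2 : ℂ) • M i j = 0 := by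
      rw [two_smul]
      nth_rewrite 2 [e3]
      exact h1
    have e5 := congrArg (fun x => ((2 : ℂ)⁻¹) • x) e4
    simpa [smul_smul] using e5

end Aux4
noncomputable section Aux5
set_option linter.unusedSectionVars false
set_option maxHeartbeats 1000000
variable {V : Type*} [AddCommGroup V] [Module ℂ V] [StarAddMonoid V] [StarModule ℂ V]

lemma aou_e_mem {pos : Set V} {e : V} (hA : IsAOU pos e) : e ∈ pos := by
  obtain ⟨r, hr, hre⟩ := hA.2.2.1 0 (star_zero V)
  have hre' : ((r : ℝ) : ℂ) • e ∈ pos := by rwa [sub_zero] at hre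
  have h := hA.1.2.1 r⁻¹ (le_of_lt (inv_pos.mpr hr)) _ hre'
  rw [smul_smul] at h
  have hne : r ≠ 0 := ne_of_gt hr
  rw [show ((r⁻¹ : ℝ) : ℂ) * ((r : ℝ) : ℂ) = 1 by
    push_cast
    field_simp] at h
  rwa [one_smul] at h

lemma aou_zero_mem {pos : Set V} {e : V} (hA : IsAOU pos e) : (0 : V) ∈ pos := by
  have h := hA.1.2.1 0 le_rfl e (aou_e_mem hA)
  simpa using h

lemma pos_shift {pos : Set V} {e : V} (hA : IsAOU pos e) {s s' : ℝ} (hss : s ≤ s')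
    {v : V} (h : (s : ℂ) • e - v ∈ pos) : (s' : ℂ) • e - v ∈ pos := by
  have h2 := hA.1.2.2.1 _ h _ (hA.1.2.1 (s' - s) (by linarith) e (aou_e_mem hA))
  have : (s : ℂ) • e - v + ((s' - s : ℝ) : ℂ) • e = (s' : ℂ) • e - v := by
    push_cast
    module
  rwa [this] at h2

lemma aou_bound {pos : Set V} {e : V} (hA : IsAOU pos e) (v : V) (hv : star v = v) :
    ∃ s : ℝ, 0 < s ∧ (s : ℂ) • e - v ∈ pos ∧ (s : ℂ) • e + v ∈ pos := by
  obtain ⟨r1, hr1, h1⟩ := hA.2.2.1 v hv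
  obtain ⟨r2, hr2, h2⟩ := hA.2.2.1 (-v) (by rw [star_neg, hv])
  refine ⟨r1 + r2, by linarith, pos_shift hA (by linarith) h1, ?_⟩
  have h3 := pos_shift hA (show r2 ≤ r1 + r2 by linarith) h2
  rwa [sub_neg_eq_add] at h3

end Aux5
noncomputable section Aux6
set_option linter.unusedSectionVars false
set_option maxHeartbeats 2000000
variable {V : Type*} [AddCommGroup V] [Module ℂ V]

lemma keyId {n : ℕ} (M : Matrix (Fin n) (Fin n) V) (e : V) (p q : Fin n) (s : ℝ) :
    eTensor (oT (Pi.single p 1 + Pi.single q 1) (Pi.single p 1 + Pi.single q 1))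
        ((s : ℂ) • e - (1/2 : ℂ) • (M p q + M q p))
      + eTensor (oT (Pi.single p 1 - Pi.single q 1) (Pi.single p 1 - Pi.single q 1))
        ((s : ℂ) • e + (1/2 : ℂ) • (M p q + M q p))
      + eTensor (oT (Pi.single p 1 + Complex.I • (Pi.single q 1 : Fin n → ℂ))
            (Pi.single p 1 + Complex.I • (Pi.single q 1 : Fin n → ℂ)))
        ((s : ℂ) • e - (Complex.I/2) • (M p q - M q p))
      + eTensor (oT (Pi.single p 1 - Complex.I • (Pi.single q 1 : Fin n → ℂ))
            (Pi.single p 1 - Complex.I • (Pi.single q 1 : Fin n → ℂ)))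
        ((s : ℂ) • e + (Complex.I/2) • (M p q - M q p))
    = ((4 * s : ℝ) : ℂ) • eTensor
          (oT (Pi.single p 1) (Pi.single p 1) + oT (Pi.single q 1) (Pi.single q 1)) e
      - (2 : ℂ) • eTensor (oT (Pi.single p 1) (Pi.single q 1)) (M p q)
      - (2 : ℂ) • eTensor (oT (Pi.single q 1) (Pi.single p 1)) (M q p) := by
  ext i j
  simp only [eTensor, oT, Matrix.of_apply, Matrix.add_apply, Matrix.sub_apply,
    Matrix.smul_apply, Pi.add_apply, Pi.sub_apply, Pi.smul_apply, Pi.single_apply,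
    smul_eq_mul]
  split_ifs <;>
  · simp only [star_add, star_sub, star_mul', star_one, star_zero, mul_one, mul_zero,
      one_mul, zero_mul, add_zero, zero_add, sub_zero, zero_sub, Complex.star_def,
      Complex.conj_I, map_one, map_zero]
    match_scalars <;>
    · simp [Complex.ext_iff]
      try ring

end Aux6
noncomputable section Aux7
set_option linter.unusedSectionVars false
set_option maxHeartbeats 1000000
variable {V : Type*} [AddCommGroup V] [Module ℂ V]

lemma eTensor_one (e : V) (n : ℕ) : eTensor (1 : Matrix (Fin n) (Fin n) ℂ) e = eMat e n := by
  ext i j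
  simp [eTensor, eMat, Matrix.one_apply, ite_smul]

lemma eMatDiagSum (e : V) (n : ℕ) :
    (∑ x : Fin n × Fin n, eTensor
        (oT (Pi.single x.1 1) (Pi.single x.1 1) + oT (Pi.single x.2 1) (Pi.single x.2 1)) e)
      = (2 * (n : ℂ)) • eMat e n := by
  ext i j
  rw [Matrix.sum_apply]
  simp only [eTensor, oT, eMat, Matrix.of_apply, Matrix.add_apply, Matrix.smul_apply,
    Pi.single_apply, apply_ite (star : ℂ → ℂ), star_one, star_zero, mul_ite, ite_mul,
    one_mul, mul_one, mul_zero, zero_mul, add_smul, ite_smul, zero_smul, one_smul,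
    Fintype.sum_prod_type, Finset.sum_add_distrib, Finset.sum_ite_eq, Finset.sum_ite_eq',
    Finset.mem_univ, if_true, Finset.sum_const, Finset.card_univ, Fintype.card_fin]
  by_cases hij : i = j <;> simp [hij, smul_smul, two_mul, add_smul, Nat.cast_smul_eq_nsmul]

lemma sum_off1 {n : ℕ} (M : Matrix (Fin n) (Fin n) V) :
    (∑ x : Fin n × Fin n, eTensor (oT (Pi.single x.1 1) (Pi.single x.2 1)) (M x.1 x.2)) = M := by
  ext i j
  rw [Matrix.sum_apply]
  simp only [eTensor, oT, Matrix.of_apply, Pi.single_apply, apply_ite (star : ℂ → ℂ),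
    star_one, star_zero, mul_ite, ite_mul, one_mul, mul_one, mul_zero, zero_mul,
    ite_smul, zero_smul, one_smul, Fintype.sum_prod_type, Finset.sum_ite_eq,
    Finset.sum_ite_eq', Finset.mem_univ, if_true]

lemma sum_off2 {n : ℕ} (M : Matrix (Fin n) (Fin n) V) :
    (∑ x : Fin n × Fin n, eTensor (oT (Pi.single x.2 1) (Pi.single x.1 1)) (M x.2 x.1)) = M := by
  rw [Fintype.sum_equiv (Equiv.prodComm (Fin n) (Fin n))
    (fun x => eTensor (oT (Pi.single x.2 1) (Pi.single x.1 1)) (M x.2 x.1))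
    (fun y => eTensor (oT (Pi.single y.1 1) (Pi.single y.2 1)) (M y.1 y.2))
    (fun x => rfl)]
  exact sum_off1 M

end Aux7
noncomputable section Aux8
set_option linter.unusedSectionVars false
set_option maxHeartbeats 2000000
variable {V : Type*} [AddCommGroup V] [Module ℂ V] [StarAddMonoid V] [StarModule ℂ V]

lemma pos_shift' {pos : Set V} {e : V} (hA : IsAOU pos e) {s s' : ℝ} (hss : s ≤ s')
    {v : V} (h : (s : ℂ) • e + v ∈ pos) : (s' : ℂ) • e + v ∈ pos := by
  rw [← sub_neg_eq_add] at h ⊢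
  exact pos_shift hA hss h

lemma Dmax_orderUnit {pos : Set V} {e : V} (hA : IsAOU pos e) {n : ℕ}
    (M : Matrix (Fin n) (Fin n) V) (hM : star M = M) :
    ∃ r : ℝ, 0 < r ∧ (r : ℂ) • eMat e n - M ∈ Dmax pos n := by
  have hMe : ∀ p q : Fin n, star (M q p) = M p q := by
    intro p q
    have := congrArg (fun N : Matrix (Fin n) (Fin n) V => N p q) hM
    simpa [Matrix.star_apply] using this
  have hherm : ∀ x : Fin n × Fin n, star ((1/2 : ℂ) • (M x.1 x.2 + M x.2 x.1))
      = (1/2 : ℂ) • (M x.1 x.2 + M x.2 x.1) := by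
    intro x
    simp only [star_smul, star_add, hMe]
    rw [show star (1/2 : ℂ) = 1/2 by simp]
    rw [add_comm]
  have hkerm : ∀ x : Fin n × Fin n, star ((Complex.I/2) • (M x.1 x.2 - M x.2 x.1))
      = (Complex.I/2) • (M x.1 x.2 - M x.2 x.1) := by
    intro x
    simp only [star_smul, star_sub, hMe]
    rw [show star (Complex.I/2 : ℂ) = -(Complex.I/2) by
      simp [Complex.star_def, map_div₀, Complex.conj_I, neg_div]]
    module
  have H : ∀ x : Fin n × Fin n, ∃ s : ℝ, 0 < s ∧
      ((s : ℂ) • e - (1/2 : ℂ) • (M x.1 x.2 + M x.2 x.1) ∈ pos ∧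
        (s : ℂ) • e + (1/2 : ℂ) • (M x.1 x.2 + M x.2 x.1) ∈ pos) ∧
      ((s : ℂ) • e - (Complex.I/2) • (M x.1 x.2 - M x.2 x.1) ∈ pos ∧
        (s : ℂ) • e + (Complex.I/2) • (M x.1 x.2 - M x.2 x.1) ∈ pos) := by
    intro x
    obtain ⟨s1, hs1, h1m, h1p⟩ := aou_bound hA _ (hherm x)
    obtain ⟨s2, hs2, h2m, h2p⟩ := aou_bound hA _ (hkerm x)
    exact ⟨s1 + s2, by linarith,
      ⟨pos_shift hA (by linarith) h1m, pos_shift' hA (by linarith) h1p⟩,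
      ⟨pos_shift hA (by linarith) h2m, pos_shift' hA (by linarith) h2p⟩⟩
  choose sf hs using H
  set S : ℝ := 1 + ∑ x : Fin n × Fin n, sf x with hSdef
  have hSx : ∀ x, sf x ≤ S := by
    intro x
    have h1 : sf x ≤ ∑ y : Fin n × Fin n, sf y :=
      Finset.single_le_sum (fun y _ => (hs y).1.le) (Finset.mem_univ x)
    rw [hSdef]; linarith
  have hSpos : 0 < S := by
    have h1 : 0 ≤ ∑ y : Fin n × Fin n, sf y :=
      Finset.sum_nonneg fun y _ => (hs y).1.le
    rw [hSdef]; linarith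
  set F : Fin n × Fin n → Matrix (Fin n) (Fin n) V := fun x =>
    eTensor (oT (Pi.single x.1 1 + Pi.single x.2 1) (Pi.single x.1 1 + Pi.single x.2 1))
        ((S : ℂ) • e - (1/2 : ℂ) • (M x.1 x.2 + M x.2 x.1))
      + eTensor (oT (Pi.single x.1 1 - Pi.single x.2 1) (Pi.single x.1 1 - Pi.single x.2 1))
        ((S : ℂ) • e + (1/2 : ℂ) • (M x.1 x.2 + M x.2 x.1))
      + eTensor (oT (Pi.single x.1 1 + Complex.I • (Pi.single x.2 1 : Fin n → ℂ))
            (Pi.single x.1 1 + Complex.I • (Pi.single x.2 1 : Fin n → ℂ)))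
        ((S : ℂ) • e - (Complex.I/2) • (M x.1 x.2 - M x.2 x.1))
      + eTensor (oT (Pi.single x.1 1 - Complex.I • (Pi.single x.2 1 : Fin n → ℂ))
            (Pi.single x.1 1 - Complex.I • (Pi.single x.2 1 : Fin n → ℂ)))
        ((S : ℂ) • e + (Complex.I/2) • (M x.1 x.2 - M x.2 x.1)) with hFdef
  have hsum : (∑ x : Fin n × Fin n, F x) ∈ Dmax pos n := by
    refine Dmax_sum _ _ fun x _ => ?_
    refine Dmax_add (Dmax_add (Dmax_add
      (Dmax_single (oT_posSemidef _) (pos_shift hA (hSx x) (hs x).2.1.1))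
      (Dmax_single (oT_posSemidef _) (pos_shift' hA (hSx x) (hs x).2.1.2)))
      (Dmax_single (oT_posSemidef _) (pos_shift hA (hSx x) (hs x).2.2.1)))
      (Dmax_single (oT_posSemidef _) (pos_shift' hA (hSx x) (hs x).2.2.2))
  have hEq : (∑ x : Fin n × Fin n, F x)
      = ((4 * S : ℝ) : ℂ) • ((2 * (n : ℂ)) • eMat e n) - (2 : ℂ) • M - (2 : ℂ) • M := by
    rw [Finset.sum_congr rfl fun x _ => keyId M e x.1 x.2 S]
    rw [Finset.sum_sub_distrib, Finset.sum_sub_distrib, ← Finset.smul_sum,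
      ← Finset.smul_sum, ← Finset.smul_sum, eMatDiagSum, sum_off1, sum_off2]
  have h2 : ((1/4 : ℝ) : ℂ) • (∑ x : Fin n × Fin n, F x) ∈ Dmax pos n :=
    Dmax_smul hA.1.2.1 _ (by norm_num) hsum
  have h3 : ((1/4 : ℝ) : ℂ) • (∑ x : Fin n × Fin n, F x)
      = ((2 * n * S : ℝ) : ℂ) • eMat e n - M := by
    rw [hEq]
    push_cast
    module
  rw [h3] at h2
  have h4 : (S : ℂ) • eMat e n ∈ Dmax pos n := by
    rw [← eTensor_one e n, ← eTensor_smul]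
    exact Dmax_single Matrix.PosSemidef.one (hA.1.2.1 S hSpos.le e (aou_e_mem hA))
  refine ⟨2 * n * S + S, ?_, ?_⟩
  · have hn : (0 : ℝ) ≤ (n : ℝ) := n.cast_nonneg
    nlinarith
  · have h5 := Dmax_add h2 h4
    have h6 : ((2 * n * S : ℝ) : ℂ) • eMat e n - M + (S : ℂ) • eMat e n
        = ((2 * n * S + S : ℝ) : ℂ) • eMat e n - M := by
      push_cast
      module
    rwa [h6] at h5

end Aux8

/-- For an AOU space `(V, V⁺, e)`, the family `D^max(V)` is a matrix
ordering on `V` and `e` is a matrix order unit for it. -/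
theorem Dmax_isMatrixOrdering_and_orderUnit
    {V : Type*} [AddCommGroup V] [Module ℂ V] [StarAddMonoid V] [StarModule ℂ V]
    (pos : Set V) (e : V) (hA : IsAOU pos e) :
    IsMatrixOrdering (Dmax pos) ∧ IsMatrixOrderUnit (Dmax pos) e := by
  constructor
  · refine ⟨?_, ?_, ?_, ?_, ?_⟩
    · intro n M hM
      exact Dmax_star hA.1.1 hM
    · intro n r hr M hM
      exact Dmax_smul hA.1.2.1 r hr hM
    · intro n M hM N hN
      exact Dmax_add hM hN
    · intro n M hM hM'
      exact Dmax_proper hA.1.2.1 hA.1.2.2.1 (aou_zero_mem hA) hA.1.2.2.2 hM hM'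
    · intro n m X M hM
      exact Dmax_mconj X hM
  · exact ⟨hA.2.1, fun n M hM => Dmax_orderUnit hA M hM⟩
end

section
/- Let V = C([0,1]) with its usual positive cone and order unit 1, and let P(t) = [[1, e^{2πit}],[e^{-2πit}, 1]] ∈ M_2(V)_h. Then P ∉ D_2^max(V); i.e., P cannot be written as a finite sum ∑_j Q_j ⊗ p_j with Q_j ∈ M_2^+ and p_j ∈ C([0,1])^+. -/
open scoped ComplexOrder
open Finset

/-- The positive cone of `C([0,1])`. -/
def posC01 : Set C(Set.Icc (0:ℝ) 1, ℂ) := {f | ∀ t, 0 ≤ f t}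

/-- The function `t ↦ e^{2πit}` in `C([0,1])`. -/
noncomputable def expMap : C(Set.Icc (0:ℝ) 1, ℂ) :=
  ⟨fun t => Complex.exp (2 * Real.pi * Complex.I * ((t : ℝ) : ℂ)), by fun_prop⟩

/-- The matrix `P(t) = [[1, e^{2πit}], [e^{-2πit}, 1]] ∈ M_2(C([0,1]))`. -/
noncomputable def Pmat : Matrix (Fin 2) (Fin 2) C(Set.Icc (0:ℝ) 1, ℂ) :=
  !![1, expMap; star expMap, 1]

lemma qf_re (a : Matrix (Fin 2) (Fin 2) ℂ) (ha : a.PosSemidef) (w : ℂ) (hw : ‖w‖ = 1) :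
    2 * ((starRingEnd ℂ) w * a 0 1).re ≤ (a 0 0).re + (a 1 1).re := by
  have h10 : a 1 0 = (starRingEnd ℂ) (a 0 1) := by
    have := congrFun (congrFun ha.1 1) 0
    simpa [Matrix.conjTranspose_apply] using this.symm
  have h11im : (a 1 1).im = 0 := by
    have h2 := congrFun (congrFun ha.1 1) 1
    have h3 : -(a 1 1).im = (a 1 1).im := by
      simpa [Matrix.conjTranspose_apply, Complex.conj_im] using congrArg Complex.im h2
    linarith
  have h := ha.dotProduct_mulVec_nonneg ![1, -(starRingEnd ℂ) w]
  have hre := (Complex.le_def.mp h).1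
  simp [Matrix.mulVec, dotProduct, Fin.sum_univ_two, h10, Complex.add_re, Complex.mul_re,
    Complex.mul_im, Complex.neg_re, Complex.neg_im, Complex.conj_re, Complex.conj_im] at hre
  have hw2 : w.re^2 + w.im^2 = 1 := by
    have h1 := Complex.sq_norm w
    rw [hw] at h1
    simpa [Complex.normSq_apply, sq] using h1.symm
  have key : (a 1 1).re * (w.re^2 + w.im^2) = (a 1 1).re := by rw [hw2]; ring
  simp only [Complex.mul_re, Complex.conj_re, Complex.conj_im]
  nlinarith [hre, key, h11im]

/-- key pointwise step -/
lemma key_step (k : ℕ) (a : Fin k → Matrix (Fin 2) (Fin 2) ℂ)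
    (q : Fin k → ℝ) (hq : ∀ i, 0 ≤ q i)
    (hPSD : ∀ i, (a i).PosSemidef) (u : ℂ) (hu : ‖u‖ = 1)
    (h00 : ∑ i, (a i 0 0).re * q i = 1)
    (h11 : ∑ i, (a i 1 1).re * q i = 1)
    (h01 : ∑ i, ((starRingEnd ℂ) u * a i 0 1).re * q i = 1) :
    ∃ i, a i 0 1 ≠ 0 ∧ u * (‖a i 0 1‖ : ℂ) = a i 0 1 := by
  set cu := (starRingEnd ℂ) u with hcu
  have hrnn : ∀ i, 0 ≤ (((a i 0 0).re + (a i 1 1).re)/2 - (cu * a i 0 1).re) := by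
    intro i
    have := qf_re (a i) (hPSD i) u hu
    rw [← hcu] at this
    linarith
  have hsum0 : ∑ i, ((((a i 0 0).re + (a i 1 1).re)/2 - (cu * a i 0 1).re) * q i) = 0 := by
    have e : ∀ i ∈ univ, ((((a i 0 0).re + (a i 1 1).re)/2 - (cu * a i 0 1).re) * q i)
        = ((a i 0 0).re * q i)/2 + ((a i 1 1).re * q i)/2 - ((cu * a i 0 1).re * q i) :=
      fun i _ => by ring
    rw [Finset.sum_congr rfl e, Finset.sum_sub_distrib, Finset.sum_add_distrib,
      ← Finset.sum_div, ← Finset.sum_div, h00, h11, h01]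
    norm_num
  have hterm0 : ∀ i ∈ univ, ((((a i 0 0).re + (a i 1 1).re)/2 - (cu * a i 0 1).re) * q i) = 0 := by
    rw [← Finset.sum_eq_zero_iff_of_nonneg (fun i _ => mul_nonneg (hrnn i) (hq i))]
    exact hsum0
  -- exists i with positive term in h01
  have hex : ∃ i, 0 < (cu * a i 0 1).re * q i := by
    by_contra hcon
    push_neg at hcon
    have : ∑ i, ((cu * a i 0 1).re * q i) ≤ 0 := Finset.sum_nonpos (fun i _ => hcon i)
    linarith
  obtain ⟨i, hi⟩ := hex
  rcases mul_pos_iff.mp hi with ⟨hx, hqy⟩ | ⟨_, hqy⟩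
  · -- q i > 0, so r i = 0
    have hri : (((a i 0 0).re + (a i 1 1).re)/2 - (cu * a i 0 1).re) = 0 := by
      have := hterm0 i (mem_univ i)
      rcases mul_eq_zero.mp this with h | h
      · exact h
      · exact absurd h (ne_of_gt hqy)
    set b := a i 0 1 with hb
    have hbne : b ≠ 0 := by
      intro h0
      rw [h0] at hx
      simp at hx
    -- second application of qf with w = b / |b|
    have habsb : (0:ℝ) < ‖b‖ := by
      simpa [norm_pos_iff] using hbne
    have hwb : ‖b / (‖b‖ : ℂ)‖ = 1 := by
      rw [norm_div, Complex.norm_real, norm_norm, div_self (ne_of_gt habsb)]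
    have h2 := qf_re (a i) (hPSD i) _ hwb
    have hconjb : ((starRingEnd ℂ) (b / (‖b‖ : ℂ)) * b) = (‖b‖ : ℂ) := by
      rw [map_div₀, div_mul_eq_mul_div, Complex.conj_ofReal, mul_comm, Complex.mul_conj,
        Complex.normSq_eq_norm_sq]
      push_cast
      rw [sq]
      field_simp
    rw [← hb, hconjb] at h2
    rw [Complex.ofReal_re] at h2
    -- now 2 |b| ≤ a00 + a11 = 2 (cu*b).re ≤ 2 |cu*b| = 2 |b|
    have hreab : (cu * b).re ≤ ‖b‖ := by
      calc (cu * b).re ≤ ‖cu * b‖ := Complex.re_le_norm _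
        _ = ‖b‖ := by
          rw [norm_mul, hcu, Complex.norm_conj, hu, one_mul]
    have hreeq : (cu * b).re = ‖b‖ := by linarith
    have habseq : ‖cu * b‖ = ‖b‖ := by
      rw [norm_mul, hcu, Complex.norm_conj, hu, one_mul]
    have him : (cu * b).im = 0 := by
      have hsq := Complex.sq_norm (cu * b)
      rw [habseq, ← hreeq] at hsq
      rw [Complex.normSq_apply] at hsq
      nlinarith [hsq]
    have hcub : cu * b = (‖b‖ : ℂ) := by
      apply Complex.ext
      · simpa using hreeq
      · simpa using him
    refine ⟨i, hbne, ?_⟩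
    have hucu : u * cu = 1 := by
      rw [hcu, Complex.mul_conj, Complex.normSq_eq_norm_sq, hu]
      norm_num
    calc u * (‖a i 0 1‖ : ℂ) = u * (cu * b) := by rw [hcub, hb]
      _ = (u * cu) * b := by ring
      _ = a i 0 1 := by rw [hucu, one_mul, hb]
  · exact absurd hqy (not_lt.mpr (hq i))


/-- `P ∉ D_2^max(C([0,1]))`: `P` is not a finite sum
`∑ Q_j ⊗ p_j` with `Q_j ∈ M_2⁺` and `p_j ≥ 0`. -/
theorem Pmat_not_mem_Dmax : Pmat ∉ Dmax posC01 2 := by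
  rintro ⟨k, a, v, hPSD, hpos, hEq⟩
  have hent : ∀ (p q : Fin 2) (t : Set.Icc (0:ℝ) 1),
      Pmat p q t = ∑ i, a i p q * v i t := by
    intro p q t
    have h1 := congrFun (congrFun hEq p) q
    rw [h1]
    simp [eTensor, Matrix.sum_apply]
  set u : Set.Icc (0:ℝ) 1 → ℂ :=
    fun t => Complex.exp (2 * Real.pi * Complex.I * ((t:ℝ):ℂ)) with hudef
  have habsu : ∀ t, ‖u t‖ = 1 := by
    intro t
    simp [hudef, Complex.norm_exp]
  have vim : ∀ i t, (v i t).im = 0 := fun i t => ((Complex.le_def.mp (hpos i t)).2).symm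
  have vre : ∀ i t, 0 ≤ (v i t).re := fun i t => by
    simpa using (Complex.le_def.mp (hpos i t)).1
  have h00 : ∀ t, ∑ i, (a i 0 0).re * (v i t).re = 1 := by
    intro t
    have h := (hent 0 0 t).symm
    have h2 : (∑ i, a i 0 0 * v i t) = 1 := by simpa [Pmat] using h
    have := congrArg Complex.re h2
    rw [Complex.re_sum] at this
    simpa [Complex.mul_re, vim] using this
  have h11 : ∀ t, ∑ i, (a i 1 1).re * (v i t).re = 1 := by
    intro t
    have h := (hent 1 1 t).symm
    have h2 : (∑ i, a i 1 1 * v i t) = 1 := by simpa [Pmat] using h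
    have := congrArg Complex.re h2
    rw [Complex.re_sum] at this
    simpa [Complex.mul_re, vim] using this
  have h01 : ∀ t, ∑ i, ((starRingEnd ℂ) (u t) * a i 0 1).re * (v i t).re = 1 := by
    intro t
    have h := (hent 0 1 t).symm
    have h2 : (∑ i, a i 0 1 * v i t) = u t := by simpa [Pmat, expMap, hudef] using h
    have h3 : (∑ i, (starRingEnd ℂ) (u t) * a i 0 1 * v i t) = (starRingEnd ℂ) (u t) * u t := by
      rw [← h2, Finset.mul_sum]
      exact Finset.sum_congr rfl (fun i _ => by ring)
    have h4 : (starRingEnd ℂ) (u t) * u t = 1 := by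
      rw [mul_comm, Complex.mul_conj, Complex.normSq_eq_norm_sq, habsu t]
      norm_num
    rw [h4] at h3
    have := congrArg Complex.re h3
    rw [Complex.re_sum] at this
    simpa [Complex.mul_re, vim] using this
  have key : ∀ t : Set.Icc (0:ℝ) 1, ∃ i, a i 0 1 ≠ 0 ∧
      u t * (‖a i 0 1‖ : ℂ) = a i 0 1 :=
    fun t => key_step k a (fun i => (v i t).re) (fun i => vre i t) hPSD (u t) (habsu t)
      (h00 t) (h11 t) (h01 t)
  -- pigeonhole over k+1 points
  have hT : ∀ m : Fin (k+1), ((m:ℝ)/(k+1)) ∈ Set.Icc (0:ℝ) 1 := by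
    intro m
    constructor
    · positivity
    · rw [div_le_one (by positivity)]
      have : (m:ℝ) ≤ k := by
        have := m.is_lt
        exact_mod_cast Nat.lt_succ_iff.mp this
      linarith
  set T : Fin (k+1) → Set.Icc (0:ℝ) 1 := fun m => ⟨(m:ℝ)/(k+1), hT m⟩ with hTdef
  choose f hf1 hf2 using fun m => key (T m)
  obtain ⟨m, m', hmm', hfmm'⟩ :=
    Fintype.exists_ne_map_eq_of_card_lt f (by simp)
  have hb := hf1 m
  have heq : u (T m) = u (T m') := by
    have e1 := hf2 m
    have e2 := hf2 m'
    rw [hfmm'] at e1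
    have habs0 : (‖a (f m') 0 1‖ : ℂ) ≠ 0 := by
      rw [hfmm'] at hb
      rw [Ne, Complex.ofReal_eq_zero]
      exact norm_ne_zero_iff.mpr hb
    exact mul_right_cancel₀ habs0 (e1.trans e2.symm)
  -- now derive contradiction from exp equality
  rw [hudef] at heq
  simp only at heq
  obtain ⟨n, hn⟩ := Complex.exp_eq_exp_iff_exists_int.mp heq
  have h2pi : (2 * (Real.pi:ℂ) * Complex.I) ≠ 0 := by
    simp [Real.pi_ne_zero, Complex.I_ne_zero]
  have hdiff : ((T m : ℝ) : ℂ) = ((T m' : ℝ) : ℂ) + n := by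
    have : (2 * (Real.pi:ℂ) * Complex.I) * ((T m : ℝ) : ℂ)
        = (2 * (Real.pi:ℂ) * Complex.I) * (((T m' : ℝ) : ℂ) + n) := by
      rw [hn]; push_cast; ring
    exact mul_left_cancel₀ h2pi this
  have hreal : (T m : ℝ) = (T m' : ℝ) + n := by
    have := congrArg Complex.re hdiff
    simpa only [Complex.ofReal_re, Complex.add_re, Complex.intCast_re] using this
  have hTm : (T m : ℝ) = (m:ℝ)/(k+1) := rfl
  have hTm' : (T m' : ℝ) = (m':ℝ)/(k+1) := rfl
  rw [hTm, hTm'] at hreal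
  have hk1 : (0:ℝ) < (k:ℝ)+1 := by positivity
  have hmk : (m:ℝ) ≤ k := by
    have := m.is_lt
    exact_mod_cast Nat.lt_succ_iff.mp this
  have hmk' : (m':ℝ) ≤ k := by
    have := m'.is_lt
    exact_mod_cast Nat.lt_succ_iff.mp this
  have hm0 : (0:ℝ) ≤ (m:ℝ) := Nat.cast_nonneg _
  have hm0' : (0:ℝ) ≤ (m':ℝ) := Nat.cast_nonneg _
  have hne : (m:ℝ) ≠ (m':ℝ) := by
    intro h
    exact hmm' (Fin.ext (by exact_mod_cast h))
  have hdiffeq : (m:ℝ) - (m':ℝ) = n * ((k:ℝ)+1) := by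
    field_simp at hreal
    linarith
  have hn0 : n = 0 := by
    have hub : |(n:ℝ)| < 1 := by
      rw [abs_lt]
      constructor
      · nlinarith [hdiffeq]
      · nlinarith [hdiffeq]
    have h1 : |n| < 1 := by exact_mod_cast (by rwa [← Int.cast_abs] at hub : ((|n|:ℤ):ℝ) < 1)
    exact Int.abs_lt_one_iff.mp h1
  rw [hn0] at hdiffeq
  simp at hdiffeq
  exact hne (by linarith)
end

section
/- Let (V,{C_n},e) be a matrix ordered *-vector space with matrix order unit e, and let N = ∩{ker f : f a state on V} and N_n = ∩{ker f : f a state on M_n(V)}. Then N_n = M_n(N) for every n. -/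
open scoped ComplexOrder
open Finset

noncomputable section Aux10

set_option linter.unusedSectionVars false

/-- standard basis vector of `ℂ^n` -/
def esing {n : ℕ} (a : Fin n) : Fin n → ℂ := Pi.single a 1

lemma esing_apply {n : ℕ} (a k : Fin n) : esing a k = if k = a then 1 else 0 := by
  simp [esing, Pi.single_apply]

lemma aux_single_star {n : ℕ} (a k : Fin n) :
    star (esing a k) = esing a k := by
  rcases eq_or_ne k a with h|h <;> simp [esing_apply, h]

lemma sum_single_mul {n : ℕ} (g : Fin n → Fin n → ℂ) (a b : Fin n) :
    (∑ k, ∑ l, (esing a k * esing b l) * g k l) = g a b := by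
  simp [esing_apply, ite_mul, mul_ite, Finset.sum_ite_eq', Finset.sum_ite_eq]

lemma sum_single_weight {n : ℕ} (c : Fin n → Fin n → ℂ) (p q : Fin n) :
    (∑ k, ∑ l, c k l * (esing k p * esing l q)) = c p q := by
  simp [esing_apply, ite_mul, mul_ite, Finset.sum_ite_eq', Finset.sum_ite_eq]

lemma sum_single_weight_smul {V : Type*} [AddCommGroup V] [Module ℂ V] {n : ℕ}
    (w : Fin n → Fin n → V) (p q : Fin n) :
    (∑ k, ∑ l, (esing k p * esing l q) • w k l) = w p q := by
  simp [esing_apply, ite_mul, mul_ite, ite_smul, Finset.sum_ite_eq', Finset.sum_ite_eq]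

lemma S_expand {n : ℕ} (g : Fin n → Fin n → ℂ) (i j : Fin n) (c : ℂ) :
    (∑ k, ∑ l, (star ((esing i + c • esing j) k) * ((esing i + c • esing j) l)) * g k l)
      = g i i + c * g i j + star c * g j i + (star c * c) * g j j := by
  have hsplit : ∀ k l, (star ((esing i + c • esing j) k) * ((esing i + c • esing j) l)) * g k l
      = (esing i k * esing i l) * g k l + c * ((esing i k * esing j l) * g k l)
        + star c * ((esing j k * esing i l) * g k l)
        + (star c * c) * ((esing j k * esing j l) * g k l) := by
    intro k l
    simp only [Pi.add_apply, Pi.smul_apply, smul_eq_mul, star_add, star_mul']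
    rw [aux_single_star, aux_single_star]
    ring
  simp_rw [hsplit, Finset.sum_add_distrib, ← Finset.mul_sum]
  rw [sum_single_mul, sum_single_mul, sum_single_mul, sum_single_mul]

lemma quad_zero {n : ℕ} (g : Fin n → Fin n → ℂ) (i j : Fin n)
    (h : ∀ x : Fin n → ℂ, x ≠ 0 → (∑ k, ∑ l, (star (x k) * x l) * g k l) = 0) :
    g i j = 0 := by
  have hne : ∀ c : ℂ, 1 + c * (if i = j then 1 else 0) ≠ 0 → (esing i + c • esing j) ≠ 0 := by
    intro c hc hx
    apply hc
    have := congrFun hx i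
    simpa [esing_apply, Pi.add_apply, mul_comm] using this
  have hval : ∀ c : ℂ, 1 + c * (if i = j then 1 else 0) ≠ 0 →
      g i i + c * g i j + star c * g j i + (star c * c) * g j j = 0 := by
    intro c hc
    rw [← S_expand g i j c]
    exact h _ (hne c hc)
  have h0 : g i i = 0 := by
    have := hval 0 (by norm_num)
    simpa using this
  have h0' : g j j = 0 := by
    have hne2 : (esing j + (0:ℂ) • esing j) ≠ 0 := by
      intro hx
      have := congrFun hx j
      simp [esing_apply] at this
    have := h _ hne2
    rw [S_expand g j j 0] at this
    simpa using this
  have h3 := hval 1 (by split_ifs <;> norm_num)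
  have h4 := hval Complex.I (by split_ifs <;> simp [Complex.ext_iff])
  rw [h0, h0'] at h3 h4
  simp only [zero_add, mul_zero, add_zero] at h3 h4
  have h4' : Complex.I * (g i j - g j i) = 0 := by
    simp only [Complex.star_def, Complex.conj_I] at h4
    linear_combination h4
  have hub : g i j - g j i = 0 := by
    rcases mul_eq_zero.mp h4' with h | h
    · exact absurd h Complex.I_ne_zero
    · exact h
  have h3' : g i j + g j i = 0 := by
    simpa using h3
  linear_combination h3' / 2 + hub / 2

section OrderAux
variable {V : Type*} [AddCommGroup V] [Module ℂ V] [StarAddMonoid V] [StarModule ℂ V]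
variable {C : ∀ n : ℕ, Set (Matrix (Fin n) (Fin n) V)} {e : V}

lemma ground_unit (hU : IsMatrixOrderUnit C e) {v : V} (hv : star v = v) :
    ∃ r : ℝ, 0 < r ∧ (Matrix.of fun _ _ : Fin 1 => ((r:ℂ) • e - v)) ∈ C 1 := by
  obtain ⟨r, hr, hmem⟩ := hU.2 1 (Matrix.of fun _ _ => v) (by
    ext i j
    simp [Matrix.star_apply, hv])
  refine ⟨r, hr, ?_⟩
  convert hmem using 1
  ext i j
  have : i = j := Subsingleton.elim i j
  subst this
  simp [eMat, Matrix.sub_apply]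

lemma ground_e (hC : IsMatrixOrdering C) (hU : IsMatrixOrderUnit C e) :
    e ∈ groundPos C := by
  obtain ⟨r, hr, hmem⟩ := ground_unit (C := C) hU (v := -e) (by simp [hU.1])
  have h1 : (Matrix.of fun _ _ : Fin 1 => (((r+1:ℝ):ℂ) • e)) ∈ C 1 := by
    convert hmem using 1
    ext i j
    push_cast
    simp [add_smul, sub_neg_eq_add]
  have h2 := hC.2.1 1 (r+1)⁻¹ (by positivity) _ h1
  have hne : ((r+1:ℝ):ℂ) ≠ 0 := by
    rw [Complex.ofReal_ne_zero]
    linarith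
  have h3 : ((((r+1)⁻¹:ℝ):ℂ) • (Matrix.of fun _ _ : Fin 1 => (((r+1:ℝ):ℂ) • e)))
      = (Matrix.of fun _ _ : Fin 1 => e) := by
    ext i j
    simp only [Matrix.smul_apply, Matrix.of_apply, smul_smul]
    rw [show (((r+1)⁻¹:ℝ):ℂ) = ((r+1:ℝ):ℂ)⁻¹ by push_cast; ring]
    rw [inv_mul_cancel₀ hne, one_smul]
  rw [h3] at h2
  exact h2

/-- positive functionals kill everything killed by all states -/
lemma kill_of_pos (hC : IsMatrixOrdering C) (hU : IsMatrixOrderUnit C e)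
    (t : V →ₗ[ℂ] ℂ) (ht : ∀ w ∈ groundPos C, 0 ≤ t w)
    (v : V) (hv : ∀ s : V →ₗ[ℂ] ℂ, IsState (groundPos C) e s → s v = 0) : t v = 0 := by
  by_cases hte : t e = 0
  · have herm : ∀ w : V, star w = w → t w = 0 := by
      intro w hw
      obtain ⟨r1, hr1, hm1⟩ := ground_unit (C := C) hU hw
      obtain ⟨r2, hr2, hm2⟩ := ground_unit (C := C) hU (v := -w) (by rw [star_neg, hw])
      have p1 : 0 ≤ t ((r1:ℂ) • e - w) := ht _ hm1
      have p2 : 0 ≤ t ((r2:ℂ) • e - -w) := ht _ hm2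
      rw [map_sub, map_smul, hte, smul_eq_mul, mul_zero, zero_sub] at p1
      rw [map_sub, map_smul, map_neg, hte, smul_eq_mul, mul_zero, zero_sub, neg_neg] at p2
      exact le_antisymm (by simpa using neg_nonneg.mp (by simpa using p1)) p2
    have h1 : star ((2:ℂ)⁻¹ • (v + star v)) = (2:ℂ)⁻¹ • (v + star v) := by
      rw [star_smul, star_add, star_star]
      congr 1
      · simp [Complex.ext_iff]
      · abel
    have h2 : star ((2:ℂ)⁻¹ • (Complex.I • (star v - v)))
        = (2:ℂ)⁻¹ • (Complex.I • (star v - v)) := by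
      rw [star_smul, star_smul, star_sub, star_star]
      rw [show star ((2:ℂ)⁻¹) = (2:ℂ)⁻¹ by simp [Complex.ext_iff]]
      rw [show star (Complex.I) = -Complex.I from Complex.conj_I]
      rw [neg_smul, ← smul_neg, neg_sub]
    have hdec : v = (2:ℂ)⁻¹ • (v + star v)
        + Complex.I • ((2:ℂ)⁻¹ • (Complex.I • (star v - v))) := by
      rw [smul_comm Complex.I ((2:ℂ)⁻¹), smul_smul Complex.I Complex.I, Complex.I_mul_I,
        neg_one_smul]
      module
    calc t v = t ((2:ℂ)⁻¹ • (v + star v))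
          + Complex.I * t ((2:ℂ)⁻¹ • (Complex.I • (star v - v))) := by
          conv_lhs => rw [hdec]
          rw [map_add, map_smul]
          simp [smul_eq_mul]
      _ = 0 := by rw [herm _ h1, herm _ h2]; simp
  · have h0 : 0 ≤ t e := ht e (ground_e hC hU)
    set r : ℝ := (t e).re with hr
    have him : (t e).im = 0 := (Complex.nonneg_iff.mp h0).2.symm
    have hre : 0 ≤ r := by
      have := (Complex.nonneg_iff.mp h0).1
      simpa [hr] using this
    have hte' : t e = (r:ℂ) := by
      rw [Complex.ext_iff]
      simp [hr, him]
    have hrne : r ≠ 0 := by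
      intro h
      apply hte
      rw [hte', h]
      simp
    set s : V →ₗ[ℂ] ℂ := (((r⁻¹:ℝ):ℂ)) • t with hs
    have hstate : IsState (groundPos C) e s := by
      constructor
      · simp only [hs, LinearMap.smul_apply, hte', smul_eq_mul]
        rw [← Complex.ofReal_mul, inv_mul_cancel₀ hrne]
        simp
      · intro w hw
        have := ht w hw
        simp only [hs, LinearMap.smul_apply, smul_eq_mul]
        exact mul_nonneg (by positivity) this
    have := hv s hstate
    simp only [hs, LinearMap.smul_apply, smul_eq_mul] at this
    rcases mul_eq_zero.mp this with h | h
    · exact absurd (inv_eq_zero.mp (by exact_mod_cast h)) hrne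
    · exact h

/-- `v ↦ (star (x p) * x q • v)_{pq}` as a linear map. -/
def rankTenL {n : ℕ} (x : Fin n → ℂ) : V →ₗ[ℂ] Matrix (Fin n) (Fin n) V where
  toFun v := Matrix.of fun p q => (star (x p) * x q) • v
  map_add' u w := by
    funext p q
    simp [Matrix.of_apply, smul_add]
  map_smul' c u := by
    funext p q
    simp [Matrix.of_apply]
    rw [smul_comm]

@[simp] lemma rankTenL_apply {n : ℕ} (x : Fin n → ℂ) (v : V) :
    rankTenL x v = Matrix.of fun p q => (star (x p) * x q) • v := rfl

/-- `M ↦ ∑ star (y k) * y l • M k l` as a linear map. -/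
def rowColL {n : ℕ} (y : Fin n → ℂ) : Matrix (Fin n) (Fin n) V →ₗ[ℂ] V where
  toFun M := ∑ k, ∑ l, (star (y k) * y l) • M k l
  map_add' M N := by
    simp only [Matrix.add_apply, smul_add, Finset.sum_add_distrib]
  map_smul' c M := by
    simp only [Matrix.smul_apply, RingHom.id_apply, Finset.smul_sum]
    refine Finset.sum_congr rfl fun k _ => Finset.sum_congr rfl fun l _ => ?_
    rw [smul_comm]

@[simp] lemma rowColL_apply {n : ℕ} (y : Fin n → ℂ) (M : Matrix (Fin n) (Fin n) V) :
    rowColL y M = ∑ k, ∑ l, (star (y k) * y l) • M k l := rfl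

lemma rankTen_pos (hC : IsMatrixOrdering C) {n : ℕ} (x : Fin n → ℂ) {v : V}
    (hv : v ∈ groundPos C) :
    (Matrix.of fun p q => (star (x p) * x q) • v) ∈ C n := by
  have h := hC.2.2.2.2 1 n (Matrix.of fun _ i => x i) _ hv
  have heq : mconj (Matrix.of fun _ i => x i) (Matrix.of fun _ _ : Fin 1 => v)
      = (Matrix.of fun p q => (star (x p) * x q) • v) := by
    ext p q
    simp [mconj]
  rwa [heq] at h

lemma rowCol_pos (hC : IsMatrixOrdering C) {n : ℕ} (y : Fin n → ℂ)
    {M : Matrix (Fin n) (Fin n) V} (hM : M ∈ C n) :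
    (∑ k, ∑ l, (star (y k) * y l) • M k l) ∈ groundPos C := by
  have h := hC.2.2.2.2 n 1 (Matrix.of fun k _ => y k) M hM
  show (Matrix.of fun _ _ : Fin 1 => ∑ k, ∑ l, (star (y k) * y l) • M k l) ∈ C 1
  have heq : mconj (Matrix.of fun k _ => y k) M
      = (Matrix.of fun _ _ : Fin 1 => ∑ k, ∑ l, (star (y k) * y l) • M k l) := by
    ext i j
    simp [mconj]
  rwa [heq] at h

end OrderAux

end Aux10

/-- For a matrix ordered `*`-vector space with matrix order unit,
the null space of the states on `M_n(V)` is `M_n(N)` where `N` is the null space of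
the states on `V`. -/
theorem matrix_state_nullspace
    {V : Type*} [AddCommGroup V] [Module ℂ V] [StarAddMonoid V] [StarModule ℂ V]
    (C : ∀ n : ℕ, Set (Matrix (Fin n) (Fin n) V)) (e : V)
    (hC : IsMatrixOrdering C) (hU : IsMatrixOrderUnit C e) (n : ℕ)
    (A : Matrix (Fin n) (Fin n) V) :
    (∀ f : Matrix (Fin n) (Fin n) V →ₗ[ℂ] ℂ,
        f (eMat e n) = 1 → (∀ M ∈ C n, 0 ≤ f M) → f A = 0) ↔
      (∀ i j, ∀ s : V →ₗ[ℂ] ℂ, IsState (groundPos C) e s → s (A i j) = 0) := by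
  constructor
  · -- states on `M_n(V)` kill `A` implies all entries are killed by states on `V`
    intro h i j s hs
    apply quad_zero (fun k l => s (A k l)) i j
    intro y hy
    set F : Matrix (Fin n) (Fin n) V →ₗ[ℂ] ℂ := s ∘ₗ rowColL y with hF
    have hrc : (rowColL (V := V) y) (eMat e n) = (∑ k, star (y k) * y k) • e := by
      simp only [rowColL_apply, eMat, Matrix.of_apply, smul_ite, smul_zero,
        Finset.sum_ite_eq, Finset.mem_univ, if_true]
      rw [← Finset.sum_smul]
    set R : ℝ := ∑ k, Complex.normSq (y k) with hR
    have hsum : (∑ k, star (y k) * y k) = ((R:ℝ):ℂ) := by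
      rw [hR]
      push_cast
      refine Finset.sum_congr rfl fun k _ => ?_
      rw [Complex.star_def, Complex.normSq_eq_conj_mul_self]
    have hFe : F (eMat e n) = ((R:ℝ):ℂ) := by
      rw [hF]
      simp only [LinearMap.comp_apply, hrc, map_smul, hs.1, smul_eq_mul, mul_one, hsum]
    have hRpos : 0 < R := by
      obtain ⟨k, hk⟩ := Function.ne_iff.mp hy
      refine Finset.sum_pos' (fun i _ => Complex.normSq_nonneg _) ⟨k, Finset.mem_univ k, ?_⟩
      exact Complex.normSq_pos.mpr hk
    set g : Matrix (Fin n) (Fin n) V →ₗ[ℂ] ℂ := (((R⁻¹:ℝ):ℂ)) • F with hg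
    have hg1 : g (eMat e n) = 1 := by
      simp only [hg, LinearMap.smul_apply, hFe, smul_eq_mul]
      rw [← Complex.ofReal_mul, inv_mul_cancel₀ (ne_of_gt hRpos)]
      simp
    have hgpos : ∀ M ∈ C n, 0 ≤ g M := by
      intro M hM
      have hpos : 0 ≤ F M := hs.2 _ (rowCol_pos hC y hM)
      simp only [hg, LinearMap.smul_apply, smul_eq_mul]
      exact mul_nonneg (by positivity) hpos
    have hgA := h g hg1 hgpos
    have hFA : F A = 0 := by
      simp only [hg, LinearMap.smul_apply, smul_eq_mul] at hgA
      rcases mul_eq_zero.mp hgA with hc | hc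
      · exact absurd hc (Complex.ofReal_ne_zero.mpr (inv_ne_zero (ne_of_gt hRpos)))
      · exact hc
    calc (∑ k, ∑ l, star (y k) * y l * (fun k l => s (A k l)) k l)
        = F A := by
          simp only [hF, LinearMap.comp_apply, rowColL_apply, map_sum, map_smul, smul_eq_mul]
      _ = 0 := hFA
  · -- entries killed by states implies states on `M_n(V)` kill `A`
    intro h f hf1 hfpos
    have hAsum : A = ∑ k, ∑ l, Matrix.of (fun p q => (esing k p * esing l q) • A k l) := by
      ext p q
      simp only [Matrix.sum_apply, Matrix.of_apply]
      exact (sum_single_weight_smul (fun k l => A k l) p q).symm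
    rw [hAsum]
    simp only [map_sum]
    refine Finset.sum_eq_zero fun k _ => Finset.sum_eq_zero fun l _ => ?_
    apply quad_zero (fun a b => f (Matrix.of fun p q => (esing a p * esing b q) • A k l)) k l
    intro x hx
    have hmat : (Matrix.of fun p q => (star (x p) * x q) • A k l)
        = ∑ a, ∑ b, (star (x a) * x b)
            • Matrix.of (fun p q => (esing a p * esing b q) • A k l) := by
      ext p q
      simp only [Matrix.sum_apply, Matrix.smul_apply, Matrix.of_apply, smul_smul]
      simp_rw [← Finset.sum_smul]
      rw [sum_single_weight (fun a b => star (x a) * x b) p q]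
    have hkill : f (Matrix.of fun p q => (star (x p) * x q) • A k l) = 0 := by
      have hcomp := kill_of_pos (C := C) (e := e) hC hU (f ∘ₗ rankTenL x)
        (fun w hw => hfpos _ (rankTen_pos hC x hw)) (A k l) (h k l)
      simpa only [LinearMap.comp_apply, rankTenL_apply] using hcomp
    have h2 : f (Matrix.of fun p q => (star (x p) * x q) • A k l)
        = ∑ a, ∑ b, (star (x a) * x b)
            * f (Matrix.of fun p q => (esing a p * esing b q) • A k l) := by
      rw [hmat]
      simp only [map_sum, map_smul, smul_eq_mul]
    calc (∑ a, ∑ b, star (x a) * x b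
            * (fun a b => f (Matrix.of fun p q => (esing a p * esing b q) • A k l)) a b)
        = f (Matrix.of fun p q => (star (x p) * x q) • A k l) := by rw [h2]
      _ = 0 := hkill
end

section
/- Let (V,{C_n},e) be a matrix ordered *-vector space with matrix order unit such that (V, C_1, e) is an AOU space. Define C_n^Arch := {A ∈ M_n(V) : r e_n + A ∈ C_n for all r > 0}. Then (V, {C_n^Arch}, e) is an operator system (the Archimedeanization), with C_1^Arch = C_1. -/
open scoped ComplexOrder
open Finset

section ArchAux
variable {V : Type*} [AddCommGroup V] [Module ℂ V] [StarAddMonoid V] [StarModule ℂ V]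

lemma mconj_add' {n m : ℕ} (X : Matrix (Fin n) (Fin m) ℂ) (A B : Matrix (Fin n) (Fin n) V) :
    mconj X (A + B) = mconj X A + mconj X B := by
  ext i j
  simp [mconj, smul_add, Finset.sum_add_distrib]

lemma mconj_smul' {n m : ℕ} (X : Matrix (Fin n) (Fin m) ℂ) (c : ℂ)
    (A : Matrix (Fin n) (Fin n) V) : mconj X (c • A) = c • mconj X A := by
  ext i j
  simp [mconj, Matrix.smul_apply, Finset.smul_sum, smul_comm c]

lemma eMat_star' {n : ℕ} {e : V} (he : star e = e) : star (eMat e n) = eMat e n := by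
  ext i j
  by_cases h : i = j
  · simp [eMat, Matrix.star_apply, h, he]
  · simp [eMat, Matrix.star_apply, h, Ne.symm h]

lemma one_by_one' (A : Matrix (Fin 1) (Fin 1) V) : A = Matrix.of fun _ _ => A 0 0 := by
  ext i j
  rw [Subsingleton.elim i 0, Subsingleton.elim j 0]
  rfl

lemma mconj_eMat' {n m : ℕ} (X : Matrix (Fin n) (Fin m) ℂ) (e : V) :
    mconj X (eMat e n) = Matrix.of fun i j => (∑ k, star (X k i) * X k j) • e := by
  ext i j
  simp [mconj, eMat, smul_ite, Finset.sum_ite_eq, Finset.sum_smul]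

lemma polarize' {n : ℕ} (M : Matrix (Fin n) (Fin n) V)
    (h : ∀ f : Fin n → ℂ, ∑ p, ∑ q, (star (f p) * f q) • M p q = 0) : M = 0 := by
  have hdiag : ∀ i, M i i = 0 := by
    intro i
    have h0 := h (fun p => if p = i then 1 else 0)
    rw [Finset.sum_congr rfl (fun p _ => Fintype.sum_eq_single i (fun q hq => by simp [hq])),
        Fintype.sum_eq_single i (fun p hp => by simp [hp])] at h0
    simpa using h0
  have hoff : ∀ i j, i ≠ j → ∀ a b : ℂ,
      (star a * b) • M i j + (star b * a) • M j i = 0 := by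
    intro i j hij a b
    have h0 := h (fun p => if p = i then a else if p = j then b else 0)
    rw [Finset.sum_congr rfl
          (fun p _ => Fintype.sum_eq_add i j hij (fun q hq => by simp [hq.1, hq.2])),
        Fintype.sum_eq_add i j hij (fun p hp => by simp [hp.1, hp.2])] at h0
    simpa [hij, Ne.symm hij, hdiag] using h0
  ext i j
  by_cases hij : i = j
  · subst hij; simpa using hdiag i
  · have h1 := hoff i j hij 1 1
    have h2 := hoff i j hij 1 Complex.I
    simp at h1 h2
    rw [← sub_eq_add_neg, ← smul_sub] at h2
    have h3 : M i j - M j i = 0 := by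
      have h4 := congrArg (fun x => Complex.I⁻¹ • x) h2
      simpa [smul_smul, inv_mul_cancel₀ Complex.I_ne_zero] using h4
    rw [sub_eq_zero] at h3
    rw [← h3, ← two_smul ℂ] at h1
    have h5 := congrArg (fun x => (2:ℂ)⁻¹ • x) h1
    simpa [smul_smul] using h5

end ArchAux


/-- Archimedeanization: if `(V, C_1, e)` is an AOU space, then the
family `C_n^Arch = {A : r e_n + A ∈ C_n for all r > 0}` makes `(V, {C_n^Arch}, e)` an
operator system, and `C_1^Arch = C_1`. -/
theorem archimedeanization_isOperatorSystem
    {V : Type*} [AddCommGroup V] [Module ℂ V] [StarAddMonoid V] [StarModule ℂ V]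
    (C : ∀ n : ℕ, Set (Matrix (Fin n) (Fin n) V)) (e : V)
    (hC : IsMatrixOrdering C) (hU : IsMatrixOrderUnit C e)
    (hAOU : IsAOU (groundPos C) e) :
    IsOperatorSystem
      (fun n => {A : Matrix (Fin n) (Fin n) V |
        ∀ r : ℝ, 0 < r → (r : ℂ) • eMat e n + A ∈ C n}) e ∧
    {A : Matrix (Fin 1) (Fin 1) V | ∀ r : ℝ, 0 < r → (r : ℂ) • eMat e 1 + A ∈ C 1}
      = C 1 := by
  obtain ⟨hher, hsc, hadd, hprop, hcomp⟩ := hC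
  obtain ⟨he, hou⟩ := hU
  obtain ⟨⟨hpher, hpsc, hpadd, hpprop⟩, -, hpou, harch⟩ := hAOU
  -- e_n ∈ C n
  have heMat : ∀ n, eMat e n ∈ C n := by
    intro n
    obtain ⟨r, hr, hrE⟩ := hou n 0 (star_zero _)
    rw [sub_zero] at hrE
    have h := hsc n (1/r) (by positivity) _ hrE
    rw [smul_smul, ← Complex.ofReal_mul, one_div, inv_mul_cancel₀ hr.ne',
        Complex.ofReal_one, one_smul] at h
    exact h
  have hsub : ∀ n, ∀ A ∈ C n, ∀ r : ℝ, 0 < r → (r:ℂ) • eMat e n + A ∈ C n :=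
    fun n A hA r hr => hadd n _ (hsc n r hr.le _ (heMat n)) _ hA
  -- membership at level 1
  have hmem : ∀ N : Matrix (Fin 1) (Fin 1) V, N ∈ C 1 → N 0 0 ∈ groundPos C := by
    intro N hN
    show (Matrix.of fun _ _ : Fin 1 => N 0 0) ∈ C 1
    rwa [← one_by_one' N]
  have he_pos : e ∈ groundPos C := by
    have h := hmem _ (heMat 1)
    simpa [eMat] using h
  -- C_1^Arch = C_1
  have hC1 : {A : Matrix (Fin 1) (Fin 1) V | ∀ r : ℝ, 0 < r → (r : ℂ) • eMat e 1 + A ∈ C 1}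
      = C 1 := by
    ext A
    refine ⟨fun hA => ?_, fun hA r hr => hsub 1 A hA r hr⟩
    have key : A 0 0 ∈ groundPos C := by
      apply harch
      intro r hr
      have h := hA r hr
      show (Matrix.of fun _ _ : Fin 1 => (r:ℂ) • e + A 0 0) ∈ C 1
      have heq : (Matrix.of fun _ _ : Fin 1 => (r:ℂ) • e + A 0 0)
          = (r:ℂ) • eMat e 1 + A := by
        ext i j
        rw [Subsingleton.elim i 0, Subsingleton.elim j 0]
        simp [eMat]
      rw [heq]; exact h
    rw [one_by_one' A]
    exact key
  -- properness
  have hproper : ∀ n (A : Matrix (Fin n) (Fin n) V),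
      (∀ r:ℝ, 0 < r → (r:ℂ) • eMat e n + A ∈ C n) →
      (∀ r:ℝ, 0 < r → (r:ℂ) • eMat e n + (-A) ∈ C n) → A = 0 := by
    intro n A hA hA'
    have key : ∀ (B : Matrix (Fin n) (Fin n) V),
        (∀ r:ℝ, 0 < r → (r:ℂ) • eMat e n + B ∈ C n) →
        ∀ f : Fin n → ℂ, (∑ p, ∑ q, (star (f p) * f q) • B p q) ∈ groundPos C := by
      intro B hB f
      set X : Matrix (Fin n) (Fin 1) ℂ := Matrix.of fun k _ => f k with hX
      set c : ℝ := ∑ k, Complex.normSq (f k) with hc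
      have hc0 : 0 ≤ c := Finset.sum_nonneg fun k _ => Complex.normSq_nonneg _
      have hXE : mconj X (eMat e n) = Matrix.of fun _ _ : Fin 1 => ((c:ℝ):ℂ) • e := by
        rw [mconj_eMat']
        ext i j
        simp only [Matrix.of_apply, hX, hc]
        congr 1
        push_cast
        refine Finset.sum_congr rfl fun k _ => ?_
        rw [Complex.star_def, Complex.normSq_eq_conj_mul_self]
      have step : ∀ r:ℝ, 0 < r →
          ((r*c : ℝ):ℂ) • e + (∑ p, ∑ q, (star (f p) * f q) • B p q) ∈ groundPos C := by
        intro r hr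
        have h1 := hcomp n 1 X _ (hB r hr)
        rw [mconj_add', mconj_smul', hXE] at h1
        have h2 := hmem _ h1
        simpa [mconj, hX, Matrix.add_apply, Matrix.smul_apply, smul_smul,
          ← Complex.ofReal_mul] using h2
      apply harch
      intro s hs
      have hrpos : 0 < s / (c+1) := by positivity
      have h3 := step (s/(c+1)) hrpos
      have h4 : (0:ℝ) ≤ s - (s/(c+1))*c := by
        rw [sub_nonneg, div_mul_eq_mul_div, div_le_iff₀ (by linarith)]
        nlinarith
      have h5 := hpadd _ (hpsc _ h4 _ he_pos) _ h3
      rw [← add_assoc, ← add_smul, ← Complex.ofReal_add, sub_add_cancel] at h5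
      exact h5
    have hv : ∀ f : Fin n → ℂ, ∑ p, ∑ q, (star (f p) * f q) • A p q = 0 := by
      intro f
      refine hpprop _ (key A hA f) ?_
      have h6 := key (-A) hA' f
      have heq : ∑ p, ∑ q, (star (f p) * f q) • (-A) p q
          = -(∑ p, ∑ q, (star (f p) * f q) • A p q) := by
        simp [Matrix.neg_apply, smul_neg, Finset.sum_neg_distrib]
      rwa [heq] at h6
    exact polarize' A hv
  refine ⟨⟨⟨?_, ?_, ?_, ?_, ?_⟩, ⟨⟨he, ?_⟩, ?_⟩⟩, hC1⟩
  · -- hermitian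
    intro n A hA
    have h1 : eMat e n + A ∈ C n := by simpa using hA 1 one_pos
    have h2 := hher n _ h1
    rw [star_add, eMat_star' he] at h2
    exact add_left_cancel h2
  · -- scaling
    intro n r hr A hA s hs
    rcases eq_or_lt_of_le hr with h0 | h0
    · rw [← h0, Complex.ofReal_zero, zero_smul, add_zero]
      exact hsc n s hs.le _ (heMat n)
    · have h := hsc n r h0.le _ (hA (s/r) (by positivity))
      rw [smul_add, smul_smul, ← Complex.ofReal_mul] at h
      rwa [show r * (s/r) = s by field_simp] at h
  · -- addition
    intro n A hA B hB r hr
    have h := hadd n _ (hA (r/2) (by positivity)) _ (hB (r/2) (by positivity))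
    have hr2 : ((r/2:ℝ):ℂ) + ((r/2:ℝ):ℂ) = (r:ℂ) := by push_cast; ring
    rw [show (r:ℂ) • eMat e n + (A + B)
        = (((r/2:ℝ):ℂ) • eMat e n + A) + (((r/2:ℝ):ℂ) • eMat e n + B) by
      rw [← hr2, add_smul]; abel]
    exact h
  · -- proper
    intro n A hA hA'
    exact hproper n A hA hA'
  · -- compatibility
    intro n m X A hA r hr
    have hE' : mconj X (eMat e n) ∈ C m := hcomp n m X _ (heMat n)
    have hE'her := hher m _ hE'
    obtain ⟨t, ht, htE⟩ := hou m _ hE'her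
    have hs : 0 < r / t := by positivity
    have h1 := hcomp n m X _ (hA (r/t) hs)
    rw [mconj_add', mconj_smul'] at h1
    have h2 := hsc m (r/t) hs.le _ htE
    have h3 := hadd m _ h2 _ h1
    rw [show ((r/t:ℝ):ℂ) • ((t:ℂ) • eMat e m - mconj X (eMat e n))
          + (((r/t:ℝ):ℂ) • mconj X (eMat e n) + mconj X A)
        = (((r/t)*t:ℝ):ℂ) • eMat e m + mconj X A by
      rw [smul_sub, smul_smul, ← Complex.ofReal_mul]; abel] at h3
    rwa [show (r/t)*t = r by field_simp] at h3
  · -- matrix order unit for Arch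
    intro n M hM
    obtain ⟨r, hr, hrM⟩ := hou n M hM
    exact ⟨r, hr, fun s hs => hsub n _ hrM s hs⟩
  · -- Archimedean
    intro n M hM r hr
    have h := hM (r/2) (by positivity) (r/2) (by positivity)
    have hr2 : ((r/2:ℝ):ℂ) + ((r/2:ℝ):ℂ) = (r:ℂ) := by push_cast; ring
    rw [show (r:ℂ) • eMat e n + M
        = ((r/2:ℝ):ℂ) • eMat e n + (((r/2:ℝ):ℂ) • eMat e n + M) by
      rw [← hr2, add_smul]; abel]
    exact h
end
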